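/- Every eigenvalue of the matrix A = −(I − Rᵀ)D has strictly negative real part, i.e., A is Hurwitz stable. -/

import Mathlib

open Matrix

/-- Under the nonnegativity, row-sum and out-connectedness assumptions on `R`,
and for a diagonal matrix `D` with strictly positive diagonal entries, every (complex)
eigenvalue of `A = -(I - Rᵀ) * D` has strictly negative real part (`A` is Hurwitz stable). -/
theorem hurwitz_stable
    {E : Type*} [Fintype E] [DecidableEq E] [Nonempty E]
    (S : Finset E) (hS : S.Nonempty)
    (R : Matrix E E ℝ)
    (hRnn : ∀ i j, 0 ≤ R i j)
    (hrow1 : ∀ i, i ∉ S → ∑ j, R i j = 1)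
    (hrow0 : ∀ i, i ∈ S → ∑ j, R i j = 0)
    (hout : ∀ i₀ : E, ∃ (l : ℕ) (p : Fin (l + 1) → E), p 0 = i₀ ∧
      p (Fin.last l) ∈ S ∧ 0 < ∏ h : Fin l, R (p h.castSucc) (p h.succ))
    (D : Matrix E E ℝ)
    (hDdiag : ∀ i j, i ≠ j → D i j = 0)
    (hDpos : ∀ i, 0 < D i i) :
    ∀ μ ∈ spectrum ℂ ((-(1 - Rᵀ) * D).map (Complex.ofReal ·)), μ.re < 0 := by
  intro μ hμ
  by_contra hre
  push_neg at hre
  set A : Matrix E E ℝ := -(1 - Rᵀ) * D with hA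
  set M : Matrix E E ℂ := A.map (Complex.ofReal ·) with hMdef
  -- get an eigenvector of the transpose
  have hdetB : (μ • (1 : Matrix E E ℂ) - M).det = 0 := by
    rw [spectrum.mem_iff] at hμ
    rw [Algebra.algebraMap_eq_smul_one] at hμ
    by_contra hd
    exact hμ ((Matrix.isUnit_iff_isUnit_det _).mpr (isUnit_iff_ne_zero.mpr hd))
  have hdetBT : ((μ • (1 : Matrix E E ℂ) - M)ᵀ).det = 0 := by
    rw [Matrix.det_transpose]; exact hdetB
  obtain ⟨v, hv0, hveig⟩ := (Matrix.exists_mulVec_eq_zero_iff).mpr hdetBT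
  have hMv : Mᵀ *ᵥ v = μ • v := by
    have ht : (μ • (1 : Matrix E E ℂ) - M)ᵀ = μ • 1 - Mᵀ := by
      rw [Matrix.transpose_sub, Matrix.transpose_smul, Matrix.transpose_one]
    rw [ht, Matrix.sub_mulVec, Matrix.smul_mulVec, Matrix.one_mulVec,
      sub_eq_zero] at hveig
    exact hveig.symm
  have heig : ∀ i, μ * v i = ∑ j, (A j i : ℂ) * v j := by
    intro i
    have := congrFun hMv i
    simpa [Matrix.mulVec, dotProduct, Matrix.transpose_apply, hMdef,
      Matrix.map_apply] using this.symm
  -- the entries of A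
  have hAentry : ∀ i j : E, A j i = R i j * D i i - (if j = i then D i i else 0) := by
    intro i j
    simp only [hA, Matrix.neg_mul, Matrix.neg_apply, Matrix.mul_apply, Matrix.sub_apply,
      Matrix.one_apply, Matrix.transpose_apply]
    rw [Finset.sum_eq_single i]
    · by_cases h : j = i <;> simp [h] <;> ring
    · intro k _ hk
      rw [hDdiag k i hk, mul_zero]
    · intro h; exact absurd (Finset.mem_univ i) h
  -- key equation
  have key : ∀ i, (μ + (D i i : ℂ)) * v i = (D i i : ℂ) * ∑ j, (R i j : ℂ) * v j := by
    intro i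
    have h1 := heig i
    have h2 : ∑ j, (A j i : ℂ) * v j
        = (D i i : ℂ) * (∑ j, (R i j : ℂ) * v j) - (D i i : ℂ) * v i := by
      have : ∀ j, (A j i : ℂ) * v j
          = (D i i : ℂ) * ((R i j : ℂ) * v j) - (if j = i then (D i i : ℂ) * v j else 0) := by
        intro j
        rw [hAentry i j]
        by_cases h : j = i <;> simp [h] <;> push_cast <;> ring
      rw [Finset.sum_congr rfl (fun j _ => this j), Finset.sum_sub_distrib,
        ← Finset.mul_sum, Finset.sum_ite_eq' Finset.univ i]
      simp
    rw [h2] at h1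
    linear_combination h1
  -- basic facts
  have hvne : ∃ k, v k ≠ 0 := Function.ne_iff.mp hv0
  obtain ⟨i₀, hi₀⟩ := Finite.exists_max fun i => ‖v i‖
  set m := ‖v i₀‖ with hmdef
  have hm : 0 < m := by
    obtain ⟨k, hk⟩ := hvne
    exact lt_of_lt_of_le (norm_pos_iff.mpr hk) (hi₀ k)
  have hsinkrow : ∀ i ∈ S, ∀ j, R i j = 0 := fun i hi j =>
    (Finset.sum_eq_zero_iff_of_nonneg (fun j _ => hRnn i j)).mp (hrow0 i hi) j
      (Finset.mem_univ j)
  -- first: μ = 0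
  have hμ0 : μ = 0 := by
    by_cases hi₀S : i₀ ∈ S
    · -- row of R at i₀ vanishes
      have hz : ∑ j, (R i₀ j : ℂ) * v j = 0 := by
        apply Finset.sum_eq_zero
        intro j _
        rw [hsinkrow i₀ hi₀S j]; simp
      have := key i₀
      rw [hz, mul_zero, mul_eq_zero] at this
      rcases this with h | h
      · have : μ = -(D i₀ i₀ : ℂ) := by linear_combination h
        rw [this] at hre
        simp only [Complex.neg_re, Complex.ofReal_re] at hre
        linarith [hDpos i₀]
      · exact absurd h (norm_pos_iff.mp hm)
    · -- |μ + d| ≤ d forces μ = 0 given Re μ ≥ 0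
      have habs : ‖μ + (D i₀ i₀ : ℂ)‖ * m ≤ D i₀ i₀ * m := by
        have e1 : ‖μ + (D i₀ i₀ : ℂ)‖ * m
            = ‖(D i₀ i₀ : ℂ) * ∑ j, (R i₀ j : ℂ) * v j‖ := by
          rw [← key i₀, norm_mul]
        rw [e1, norm_mul, Complex.norm_real, Real.norm_eq_abs, abs_of_pos (hDpos i₀)]
        apply mul_le_mul_of_nonneg_left _ (le_of_lt (hDpos i₀))
        calc ‖∑ j, (R i₀ j : ℂ) * v j‖
            ≤ ∑ j, ‖(R i₀ j : ℂ) * v j‖ := norm_sum_le _ _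
          _ = ∑ j, R i₀ j * ‖v j‖ := by
              apply Finset.sum_congr rfl
              intro j _
              rw [norm_mul, Complex.norm_real, Real.norm_eq_abs, abs_of_nonneg (hRnn i₀ j)]
          _ ≤ ∑ j, R i₀ j * m := by
              apply Finset.sum_le_sum
              intro j _
              exact mul_le_mul_of_nonneg_left (hi₀ j) (hRnn i₀ j)
          _ = m := by rw [← Finset.sum_mul, hrow1 i₀ hi₀S, one_mul]
      have habs' : ‖μ + (D i₀ i₀ : ℂ)‖ ≤ D i₀ i₀ :=
        le_of_mul_le_mul_right habs hm
      have hsq : Complex.normSq (μ + (D i₀ i₀ : ℂ)) ≤ (D i₀ i₀) ^ 2 := by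
        have := mul_le_mul habs' habs' (norm_nonneg _) (le_of_lt (hDpos i₀))
        rw [← Complex.sq_norm]
        nlinarith [this]
      have hexp : Complex.normSq (μ + (D i₀ i₀ : ℂ))
          = (μ.re + D i₀ i₀) ^ 2 + μ.im ^ 2 := by
        simp [Complex.normSq_apply, Complex.add_re, Complex.add_im]
        ring
      rw [hexp] at hsq
      have h1 : μ.re = 0 ∧ μ.im = 0 := by
        constructor <;> nlinarith [hre, hDpos i₀, sq_nonneg μ.re, sq_nonneg μ.im]
      exact Complex.ext h1.1 h1.2
  -- with μ = 0, v is harmonic for R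
  have hveq : ∀ i, v i = ∑ j, (R i j : ℂ) * v j := by
    intro i
    have := key i
    rw [hμ0, zero_add] at this
    have hd : (D i i : ℂ) ≠ 0 := by
      simp only [ne_eq, Complex.ofReal_eq_zero]
      exact ne_of_gt (hDpos i)
    exact mul_left_cancel₀ hd this
  -- maximum principle step
  have hstep : ∀ i, ‖v i‖ = m →
      i ∉ S ∧ ∀ j, R i j ≠ 0 → ‖v j‖ = m := by
    intro i him
    have hiS : i ∉ S := by
      intro hiS
      have hz : v i = 0 := by
        rw [hveq i]
        apply Finset.sum_eq_zero
        intro j _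
        rw [hsinkrow i hiS j]; simp
      rw [hz, norm_zero] at him
      exact absurd him.symm (ne_of_gt hm)
    refine ⟨hiS, ?_⟩
    have h1 : m ≤ ∑ k, R i k * ‖v k‖ := by
      calc m = ‖v i‖ := him.symm
        _ = ‖∑ k, (R i k : ℂ) * v k‖ := by rw [← hveq i]
        _ ≤ ∑ k, ‖(R i k : ℂ) * v k‖ := norm_sum_le _ _
        _ = ∑ k, R i k * ‖v k‖ := by
            apply Finset.sum_congr rfl
            intro k _
            rw [norm_mul, Complex.norm_real, Real.norm_eq_abs, abs_of_nonneg (hRnn i k)]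
    have h3 : ∑ k, R i k * (m - ‖v k‖) = 0 := by
      have he : ∑ k, R i k * (m - ‖v k‖)
          = m - ∑ k, R i k * ‖v k‖ := by
        simp only [mul_sub]
        rw [Finset.sum_sub_distrib, ← Finset.sum_mul, hrow1 i hiS, one_mul]
      have hle : ∑ k, R i k * (m - ‖v k‖) ≤ 0 := by
        rw [he]; linarith
      have hge : 0 ≤ ∑ k, R i k * (m - ‖v k‖) := by
        apply Finset.sum_nonneg
        intro k _
        exact mul_nonneg (hRnn i k) (by linarith [hi₀ k])
      linarith
    intro j hRij
    have := (Finset.sum_eq_zero_iff_of_nonneg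
      (fun k _ => mul_nonneg (hRnn i k) (by linarith [hi₀ k]))).mp h3 j (Finset.mem_univ j)
    rcases mul_eq_zero.mp this with h | h
    · exact absurd h hRij
    · linarith [hi₀ j]
  -- follow a path to a sink
  obtain ⟨l, p, hp0, hplast, hprod⟩ := hout i₀
  have hfac : ∀ h : Fin l, R (p h.castSucc) (p h.succ) ≠ 0 := by
    intro h h0
    rw [Finset.prod_eq_zero (Finset.mem_univ h) h0] at hprod
    exact lt_irrefl 0 hprod
  have hall : ∀ k : Fin (l + 1), ‖v (p k)‖ = m := by
    intro k
    induction k using Fin.induction with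
    | zero => rw [hp0]
    | succ h ih => exact (hstep _ ih).2 _ (hfac h)
  exact (hstep (p (Fin.last l)) (hall _)).1 hplast
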